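/- Let λ > 0. Every solution f : ℕ_* → ℝ of the equation x·f(x) − λ·f(x+1) = h(x) (x ∈ ℕ_*) is of the form f(x) = f̃_h(x) + C·(x−1)!/λ^x for some constant C ∈ ℝ; consequently, if h ∈ E_λ has polynomial growth, f̃_h is the unique solution with polynomial growth at infinity. -/

import Mathlib

open Filter

/-- `h ∈ E_λ` : for every polynomial `P`, `Σ_{i ≥ 1} (λ^i/i!)·|h(i)·P(i)| < ∞`
(the sum over `i ≥ 1` is written with the shifted index `i = j + 1`). -/
def memE (lam : ℝ) (h : ℕ → ℝ) : Prop :=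
  ∀ P : Polynomial ℝ,
    Summable fun j : ℕ =>
      lam ^ (j + 1) / ((j + 1).factorial : ℝ) * |h (j + 1) * P.eval ((j : ℝ) + 1)|

/-- `f̃_h(x) = ((x−1)!/λ^x)·Σ_{i=x}^∞ (λ^i/i!)·h(i)` (shifted index `i = x + j`). -/
noncomputable def ftilde (lam : ℝ) (h : ℕ → ℝ) (x : ℕ) : ℝ :=
  ((x - 1).factorial : ℝ) / lam ^ x * ∑' j : ℕ, lam ^ (x + j) * h (x + j) / ((x + j).factorial : ℝ)


-- helper: polynomials are dominated by 2^n
lemma pow_le_const_mul_two_pow (m : ℕ) :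
    ∃ C : ℝ, 0 < C ∧ ∀ n : ℕ, (n : ℝ) ^ m ≤ C * 2 ^ n := by
  have hs : Summable fun n : ℕ => (n : ℝ) ^ m * (1/2 : ℝ) ^ n := by
    apply summable_pow_mul_geometric_of_norm_lt_one
    rw [Real.norm_eq_abs]; rw [abs_of_pos]; norm_num; norm_num
  refine ⟨max (∑' n : ℕ, (n : ℝ) ^ m * (1/2 : ℝ) ^ n) 1, lt_of_lt_of_le one_pos (le_max_right _ _), ?_⟩
  intro n
  have h1 : (n : ℝ) ^ m * (1/2 : ℝ) ^ n ≤ ∑' n : ℕ, (n : ℝ) ^ m * (1/2 : ℝ) ^ n :=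
    hs.le_tsum n (fun j _ => by positivity)
  have h2 : (n : ℝ) ^ m = ((n : ℝ) ^ m * (1/2 : ℝ) ^ n) * 2 ^ n := by
    rw [mul_assoc, ← mul_pow]; norm_num
  rw [h2]
  have : (0:ℝ) < 2 ^ n := by positivity
  calc ((n : ℝ) ^ m * (1/2 : ℝ) ^ n) * 2 ^ n
      ≤ (∑' n : ℕ, (n : ℝ) ^ m * (1/2 : ℝ) ^ n) * 2 ^ n := by gcongr
    _ ≤ max (∑' n : ℕ, (n : ℝ) ^ m * (1/2 : ℝ) ^ n) 1 * 2 ^ n := by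
        gcongr; exact le_max_left _ _

lemma abs_summable_base (lam : ℝ) (hlam : 0 < lam) (h : ℕ → ℝ) (hh : memE lam h) :
    Summable fun j : ℕ => |lam ^ (j + 1) * h (j + 1) / ((j + 1).factorial : ℝ)| := by
  have := hh 1
  simp only [Polynomial.eval_one, mul_one] at this
  refine this.congr fun j => ?_
  rw [abs_div, abs_mul, abs_of_pos (pow_pos hlam _),
    abs_of_pos (by positivity : (0:ℝ) < ((j+1).factorial : ℝ))]
  ring

lemma abs_summable_tail (lam : ℝ) (hlam : 0 < lam) (h : ℕ → ℝ) (hh : memE lam h)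
    (x : ℕ) (hx : 1 ≤ x) :
    Summable fun j : ℕ => |lam ^ (x + j) * h (x + j) / ((x + j).factorial : ℝ)| := by
  have hbase := abs_summable_base lam hlam h hh
  have := (summable_nat_add_iff (f := fun j : ℕ =>
    |lam ^ (j + 1) * h (j + 1) / ((j + 1).factorial : ℝ)|) (x - 1)).2 hbase
  refine this.congr fun j => ?_
  have : j + (x - 1) + 1 = x + j := by omega
  rw [this]

lemma summable_tail (lam : ℝ) (hlam : 0 < lam) (h : ℕ → ℝ) (hh : memE lam h)
    (x : ℕ) (hx : 1 ≤ x) :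
    Summable fun j : ℕ => lam ^ (x + j) * h (x + j) / ((x + j).factorial : ℝ) :=
  (abs_summable_tail lam hlam h hh x hx).of_abs

lemma ftilde_rec (lam : ℝ) (hlam : 0 < lam) (h : ℕ → ℝ) (hh : memE lam h)
    (x : ℕ) (hx : 1 ≤ x) :
    (x : ℝ) * ftilde lam h x - lam * ftilde lam h (x + 1) = h x := by
  have hsum := summable_tail lam hlam h hh x hx
  have hsplit : (∑' j : ℕ, lam ^ (x + j) * h (x + j) / ((x + j).factorial : ℝ))
      = lam ^ x * h x / (x.factorial : ℝ)
        + ∑' j : ℕ, lam ^ ((x+1) + j) * h ((x+1) + j) / (((x+1) + j).factorial : ℝ) := by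
    have h0 : lam ^ (x+0) * h (x+0) / ((x+0).factorial : ℝ)
        = lam ^ x * h x / (x.factorial : ℝ) := by norm_num
    rw [hsum.tsum_eq_zero_add, h0]
    congr 1
    exact tsum_congr fun j => by rw [show x + (j+1) = (x+1) + j from by omega]
  unfold ftilde
  have hfac : ((x + 1 - 1).factorial : ℝ) = (x.factorial : ℝ) := by norm_num
  have hxfac : (x : ℝ) * ((x - 1).factorial : ℝ) = (x.factorial : ℝ) := by
    rw [← Nat.cast_mul, Nat.mul_factorial_pred (by omega)]
  have hlx : lam ^ x ≠ 0 := by positivity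
  have hfx : (x.factorial : ℝ) ≠ 0 := by positivity
  rw [hsplit, hfac]
  generalize (∑' j : ℕ, lam ^ ((x+1) + j) * h ((x+1) + j) / (((x+1) + j).factorial : ℝ)) = t
  have hx0 : (x : ℝ) ≠ 0 := by
    exact (Nat.cast_pos.mpr (by omega : 0 < x)).ne'
  have hf1 : ((x - 1).factorial : ℝ) ≠ 0 := by positivity
  rw [← hxfac]
  have hl : lam ≠ 0 := hlam.ne'
  field_simp
  ring

lemma summable_M (lam : ℝ) (hlam : 0 < lam) (m : ℕ) :
    Summable fun j : ℕ => lam ^ j * ((j : ℝ) + 1) ^ m / (j.factorial : ℝ) := by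
  obtain ⟨C, hC, hCb⟩ := pow_le_const_mul_two_pow m
  refine Summable.of_nonneg_of_le (fun j => by positivity) (fun j => ?_)
    (((Real.summable_pow_div_factorial (2*lam)).mul_left (2*C)))
  have h1 : ((j : ℝ) + 1) ^ m ≤ C * 2 ^ (j+1) := by
    have := hCb (j+1); push_cast at this; exact this
  calc lam ^ j * ((j : ℝ) + 1) ^ m / (j.factorial : ℝ)
      ≤ lam ^ j * (C * 2 ^ (j+1)) / (j.factorial : ℝ) := by gcongr
    _ = 2*C * ((2*lam) ^ j / (j.factorial : ℝ)) := by rw [mul_pow]; ring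

lemma homog_form (lam : ℝ) (hlam : 0 < lam) (g : ℕ → ℝ)
    (hg : ∀ x : ℕ, 1 ≤ x → (x : ℝ) * g x - lam * g (x + 1) = 0) :
    ∀ x : ℕ, 1 ≤ x → g x = (lam * g 1) * ((x - 1).factorial : ℝ) / lam ^ x := by
  intro x hx
  induction x, hx using Nat.le_induction with
  | base => simp; field_simp
  | succ n hn ih =>
    have hrec := hg n hn
    have hln : lam ≠ 0 := hlam.ne'
    have hgn1 : g (n + 1) = (n : ℝ) * g n / lam := by
      field_simp at hrec ⊢; linarith
    rw [hgn1, ih]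
    have hfac : ((n + 1 - 1).factorial : ℝ) = (n : ℝ) * ((n - 1).factorial : ℝ) := by
      rw [Nat.add_sub_cancel, ← Nat.cast_mul, Nat.mul_factorial_pred (by omega)]
    rw [hfac, pow_succ]
    field_simp

lemma ftilde_bound (lam : ℝ) (hlam : 0 < lam) (h : ℕ → ℝ) (hh : memE lam h)
    (m N : ℕ) (K : ℝ) (hK : 0 ≤ K) (hb : ∀ i : ℕ, N ≤ i → |h i| ≤ K * (i : ℝ) ^ m)
    (x : ℕ) (hx1 : 1 ≤ x) (hxN : N ≤ x) :
    |ftilde lam h x| ≤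
      K * (∑' j : ℕ, lam ^ j * ((j : ℝ) + 1) ^ m / (j.factorial : ℝ)) * (x : ℝ) ^ m := by
  set M := ∑' j : ℕ, lam ^ j * ((j : ℝ) + 1) ^ m / (j.factorial : ℝ) with hM
  have hfacpos : (0:ℝ) < ((x - 1).factorial : ℝ) := by positivity
  have hlx : (0:ℝ) < lam ^ x := by positivity
  have habs := abs_summable_tail lam hlam h hh x hx1
  -- termwise bound
  have hterm : ∀ j : ℕ, |lam ^ (x + j) * h (x + j) / ((x + j).factorial : ℝ)|
      ≤ (lam ^ x / ((x - 1).factorial : ℝ) * (K * (x : ℝ) ^ m)) *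
        (lam ^ j * ((j : ℝ) + 1) ^ m / (j.factorial : ℝ)) := by
    intro j
    have hfj : (0:ℝ) < ((x + j).factorial : ℝ) := by positivity
    have e1 : |lam ^ (x + j) * h (x + j) / ((x + j).factorial : ℝ)|
        = lam ^ (x + j) * |h (x + j)| / ((x + j).factorial : ℝ) := by
      rw [abs_div, abs_mul, abs_of_pos (pow_pos hlam _), abs_of_pos hfj]
    rw [e1]
    have hden : ((x - 1).factorial : ℝ) * (j.factorial : ℝ) ≤ ((x + j).factorial : ℝ) := by
      have h1 : (x - 1).factorial * j.factorial ≤ (x + j).factorial := by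
        calc (x - 1).factorial * j.factorial ≤ x.factorial * j.factorial :=
              Nat.mul_le_mul (Nat.factorial_le (by omega)) le_rfl
          _ ≤ (x + j).factorial :=
              Nat.le_of_dvd (Nat.factorial_pos _) (Nat.factorial_mul_factorial_dvd_factorial_add x j)
      exact_mod_cast h1
    have hnum : |h (x + j)| ≤ K * ((x : ℝ) * ((j : ℝ) + 1)) ^ m := by
      calc |h (x + j)| ≤ K * ((x + j : ℕ) : ℝ) ^ m := hb _ (by omega)
        _ ≤ K * ((x : ℝ) * ((j : ℝ) + 1)) ^ m := by
            refine mul_le_mul_of_nonneg_left (pow_le_pow_left₀ (by positivity) ?_ m) hK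
            push_cast
            have hx' : (1:ℝ) ≤ (x:ℝ) := by exact_mod_cast hx1
            nlinarith [Nat.cast_nonneg (α := ℝ) j]
    calc lam ^ (x + j) * |h (x + j)| / ((x + j).factorial : ℝ)
        ≤ lam ^ (x + j) * (K * ((x : ℝ) * ((j : ℝ) + 1)) ^ m) /
            (((x - 1).factorial : ℝ) * (j.factorial : ℝ)) := by
          gcongr
      _ = (lam ^ x / ((x - 1).factorial : ℝ) * (K * (x : ℝ) ^ m)) *
            (lam ^ j * ((j : ℝ) + 1) ^ m / (j.factorial : ℝ)) := by
          rw [pow_add, mul_pow]; ring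
  -- sum the bound
  have hsumR : Summable fun j : ℕ =>
      (lam ^ x / ((x - 1).factorial : ℝ) * (K * (x : ℝ) ^ m)) *
        (lam ^ j * ((j : ℝ) + 1) ^ m / (j.factorial : ℝ)) :=
    (summable_M lam hlam m).mul_left _
  have htsum : (∑' j : ℕ, |lam ^ (x + j) * h (x + j) / ((x + j).factorial : ℝ)|)
      ≤ (lam ^ x / ((x - 1).factorial : ℝ) * (K * (x : ℝ) ^ m)) * M := by
    rw [hM, ← tsum_mul_left]
    exact Summable.tsum_le_tsum hterm habs hsumR
  have habs_tsum : |∑' j : ℕ, lam ^ (x + j) * h (x + j) / ((x + j).factorial : ℝ)|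
      ≤ ∑' j : ℕ, |lam ^ (x + j) * h (x + j) / ((x + j).factorial : ℝ)| := by
    have := norm_tsum_le_tsum_norm
      (f := fun j : ℕ => lam ^ (x + j) * h (x + j) / ((x + j).factorial : ℝ))
      (by simp only [Real.norm_eq_abs]; exact habs)
    simp only [Real.norm_eq_abs] at this
    exact this
  have : |ftilde lam h x| = ((x - 1).factorial : ℝ) / lam ^ x *
      |∑' j : ℕ, lam ^ (x + j) * h (x + j) / ((x + j).factorial : ℝ)| := by
    unfold ftilde
    rw [abs_mul, abs_of_pos (by positivity : (0:ℝ) < ((x - 1).factorial : ℝ) / lam ^ x)]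
  rw [this]
  calc ((x - 1).factorial : ℝ) / lam ^ x *
        |∑' j : ℕ, lam ^ (x + j) * h (x + j) / ((x + j).factorial : ℝ)|
      ≤ ((x - 1).factorial : ℝ) / lam ^ x *
        ((lam ^ x / ((x - 1).factorial : ℝ) * (K * (x : ℝ) ^ m)) * M) := by
        gcongr
        exact le_trans habs_tsum htsum
    _ = K * M * (x : ℝ) ^ m := by field_simp

lemma rpow_bound (p c : ℝ) (u : ℕ → ℝ) (N : ℕ)
    (hb : ∀ x : ℕ, N ≤ x → ‖u x‖ ≤ c * ‖(x : ℝ) ^ p‖) :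
    ∀ x : ℕ, max N 1 ≤ x → |u x| ≤ (max c 0) * (x : ℝ) ^ (⌈p⌉₊) := by
  intro x hx
  have hx1 : (1 : ℝ) ≤ (x : ℝ) := by
    have : 1 ≤ x := le_trans (le_max_right N 1) hx
    exact_mod_cast this
  have hnn : (0:ℝ) ≤ (x : ℝ) ^ p := Real.rpow_nonneg (by positivity) p
  have h1 : ‖(x : ℝ) ^ p‖ = (x : ℝ) ^ p := by rw [Real.norm_eq_abs, abs_of_nonneg hnn]
  have h2 : (x : ℝ) ^ p ≤ (x : ℝ) ^ (⌈p⌉₊ : ℕ) := by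
    rw [← Real.rpow_natCast (x : ℝ) ⌈p⌉₊]
    exact Real.rpow_le_rpow_of_exponent_le hx1 (Nat.le_ceil p)
  calc |u x| = ‖u x‖ := (Real.norm_eq_abs _).symm
    _ ≤ c * ‖(x : ℝ) ^ p‖ := hb x (le_trans (le_max_left N 1) hx)
    _ ≤ (max c 0) * ‖(x : ℝ) ^ p‖ := by
        apply mul_le_mul_of_nonneg_right (le_max_left c 0) (norm_nonneg _)
    _ = (max c 0) * (x : ℝ) ^ p := by rw [h1]
    _ ≤ (max c 0) * (x : ℝ) ^ (⌈p⌉₊ : ℕ) :=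
        mul_le_mul_of_nonneg_left h2 (le_max_right c 0)

/-- Every solution of `x·f(x) − λ·f(x+1) = h(x)` on `ℕ_*` is of the form
`f̃_h + C·(x−1)!/λ^x`; consequently if `h` has polynomial growth, `f̃_h` is the
unique solution of polynomial growth. -/
theorem stein_solution_unique (lam : ℝ) (hlam : 0 < lam) (h : ℕ → ℝ) (hh : memE lam h)
    (f : ℕ → ℝ) (heq : ∀ x : ℕ, 1 ≤ x → (x : ℝ) * f x - lam * f (x + 1) = h x) :
    (∃ C : ℝ, ∀ x : ℕ, 1 ≤ x →
        f x = ftilde lam h x + C * ((x - 1).factorial : ℝ) / lam ^ x) ∧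
      ((∃ p : ℝ, (fun x : ℕ => h x) =O[atTop] fun x : ℕ => (x : ℝ) ^ p) →
        (∃ q : ℝ, (fun x : ℕ => f x) =O[atTop] fun x : ℕ => (x : ℝ) ^ q) →
          ∀ x : ℕ, 1 ≤ x → f x = ftilde lam h x) := by
  have part1 : ∃ C : ℝ, ∀ x : ℕ, 1 ≤ x →
      f x = ftilde lam h x + C * ((x - 1).factorial : ℝ) / lam ^ x := by
    set g := fun x : ℕ => f x - ftilde lam h x with hgdef
    have hg0 : ∀ x : ℕ, 1 ≤ x → (x : ℝ) * g x - lam * g (x + 1) = 0 := by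
      intro x hx
      have h1 := heq x hx
      have h2 := ftilde_rec lam hlam h hh x hx
      simp only [hgdef]
      ring_nf
      ring_nf at h1 h2
      linarith
    refine ⟨lam * g 1, fun x hx => ?_⟩
    have hform := homog_form lam hlam g hg0 x hx
    have : f x - ftilde lam h x = lam * g 1 * ((x - 1).factorial : ℝ) / lam ^ x := by
      rw [← hform]
    linarith
  refine ⟨part1, ?_⟩
  rintro ⟨p, hpO⟩ ⟨q, hqO⟩
  obtain ⟨C, hC⟩ := part1
  suffices hC0 : C = 0 by
    intro x hx; rw [hC x hx, hC0]; ring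
  obtain ⟨c₁, hc₁⟩ := hpO.bound
  rw [eventually_atTop] at hc₁
  obtain ⟨N₁, hN₁⟩ := hc₁
  obtain ⟨c₂, hc₂⟩ := hqO.bound
  rw [eventually_atTop] at hc₂
  obtain ⟨N₂, hN₂⟩ := hc₂
  have hhb := rpow_bound p c₁ h N₁ hN₁
  have hfb := rpow_bound q c₂ f N₂ hN₂
  set m := ⌈p⌉₊ with hm
  set k := ⌈q⌉₊ with hk
  set K₁ := max c₁ 0 with hK₁
  set K₂ := max c₂ 0 with hK₂
  have hK₁0 : 0 ≤ K₁ := le_max_right _ _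
  have hK₂0 : 0 ≤ K₂ := le_max_right _ _
  set M := ∑' j : ℕ, lam ^ j * ((j : ℝ) + 1) ^ m / (j.factorial : ℝ) with hMdef
  have hM0 : 0 ≤ M := tsum_nonneg fun j => by positivity
  set r := max m k with hr
  set B := K₂ + K₁ * M with hB
  have hB0 : 0 ≤ B := by positivity
  obtain ⟨C₂, hC₂pos, hC₂⟩ := pow_le_const_mul_two_pow (r + 1)
  set N₀ := max (max N₁ 1) (max N₂ 1) with hN₀
  have key : ∀ x : ℕ, N₀ ≤ x → |C| ≤ (B * C₂) * ((2 * lam) ^ x / (x.factorial : ℝ)) := by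
    intro x hx
    have hx1 : 1 ≤ x := by omega
    have hxR : (1 : ℝ) ≤ (x : ℝ) := by exact_mod_cast hx1
    have hfacpos : (0:ℝ) < ((x - 1).factorial : ℝ) := by positivity
    have hlx : (0:ℝ) < lam ^ x := by positivity
    have hdiff : f x - ftilde lam h x = C * ((x - 1).factorial : ℝ) / lam ^ x := by
      have := hC x hx1; linarith
    have habsC : |C| * ((x - 1).factorial : ℝ) / lam ^ x = |f x - ftilde lam h x| := by
      rw [hdiff, abs_div, abs_mul, abs_of_pos hfacpos, abs_of_pos hlx]
    have hFb := ftilde_bound lam hlam h hh m (max N₁ 1) K₁ hK₁0 hhb x hx1 (by omega)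
    rw [← hMdef] at hFb
    have hfx := hfb x (by omega)
    have hbound : |f x - ftilde lam h x| ≤ B * (x : ℝ) ^ r := by
      calc |f x - ftilde lam h x| ≤ |f x| + |ftilde lam h x| := abs_sub _ _
        _ ≤ K₂ * (x : ℝ) ^ k + K₁ * M * (x : ℝ) ^ m := add_le_add hfx hFb
        _ ≤ K₂ * (x : ℝ) ^ r + K₁ * M * (x : ℝ) ^ r := by
            have e1 : (x:ℝ) ^ k ≤ (x:ℝ) ^ r := pow_le_pow_right₀ hxR (le_max_right m k)
            have e2 : (x:ℝ) ^ m ≤ (x:ℝ) ^ r := pow_le_pow_right₀ hxR (le_max_left m k)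
            have q1 := mul_le_mul_of_nonneg_left e1 hK₂0
            have q2 := mul_le_mul_of_nonneg_left e2 (by positivity : (0:ℝ) ≤ K₁ * M)
            linarith
        _ = B * (x : ℝ) ^ r := by rw [hB]; ring
    have h1 : |C| * ((x - 1).factorial : ℝ) ≤ B * (x : ℝ) ^ r * lam ^ x := by
      have := habsC ▸ hbound
      rw [div_le_iff₀ hlx] at this
      linarith
    have h2 : |C| ≤ B * (x : ℝ) ^ r * lam ^ x / ((x - 1).factorial : ℝ) :=
      (le_div_iff₀ hfacpos).mpr h1
    have hxf : (x.factorial : ℝ) = (x : ℝ) * ((x - 1).factorial : ℝ) := by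
      rw [← Nat.cast_mul, Nat.mul_factorial_pred (by omega)]
    have hx0 : (x : ℝ) ≠ 0 := by positivity
    have h3 : B * (x : ℝ) ^ r * lam ^ x / ((x - 1).factorial : ℝ)
        = B * ((x : ℝ) ^ (r + 1) * lam ^ x) / (x.factorial : ℝ) := by
      rw [hxf, pow_succ]
      field_simp
    calc |C| ≤ B * (x : ℝ) ^ r * lam ^ x / ((x - 1).factorial : ℝ) := h2
      _ = B * ((x : ℝ) ^ (r + 1) * lam ^ x) / (x.factorial : ℝ) := h3
      _ ≤ B * (C₂ * 2 ^ x * lam ^ x) / (x.factorial : ℝ) := by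
          gcongr
          exact hC₂ x
      _ = (B * C₂) * ((2 * lam) ^ x / (x.factorial : ℝ)) := by rw [mul_pow]; ring
  have htend : Tendsto (fun x : ℕ => (B * C₂) * ((2 * lam) ^ x / (x.factorial : ℝ)))
      atTop (nhds 0) := by
    have := (FloorSemiring.tendsto_pow_div_factorial_atTop (K := ℝ) (2 * lam)).const_mul (B * C₂)
    simpa using this
  have hCle : |C| ≤ 0 := ge_of_tendsto htend (eventually_atTop.2 ⟨N₀, key⟩)
  exact abs_nonpos_iff.mp hCle
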